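/- Let f: 2^[M] → ℝ_{≥0} be defined by f(S) = I(X_S; Y | X_{S^c}) for independent finite inputs X_1,...,X_M and output Y. Define R = {r ∈ ℝ_{≥0}^M : ∑_{i∈S} r_i ≤ f(S) for all S ⊆ [M]}. If r ∈ R satisfies ∑_{i∈S} r_i = f(S) for a set S, then for every L ⊆ S, I(X_L; Y | X_{S^c}) ≤ ∑_{i∈L} r_i ≤ I(X_L; Y | X_{L^c}). -/

import Mathlib

open Finset

/-- Marginal joint pmf of `(X_S, Y)` obtained from the joint pmf `p` of
`(X_1,…,X_M, Y)` by summing out inputs outside `S`; evaluated at the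
values that `x` takes on `S` and at `y`. -/
noncomputable def margXY {M : ℕ} {α : Fin M → Type*} [∀ i, Fintype (α i)]
    [∀ i, DecidableEq (α i)] {β : Type*} [Fintype β]
    (p : (∀ i, α i) → β → ℝ) (S : Finset (Fin M)) (x : ∀ i, α i) (y : β) : ℝ :=
  ∑ x' : ∀ i, α i, if ∀ i ∈ S, x' i = x i then p x' y else 0

/-- Marginal pmf of `X_S`. -/
noncomputable def margX {M : ℕ} {α : Fin M → Type*} [∀ i, Fintype (α i)]
    [∀ i, DecidableEq (α i)] {β : Type*} [Fintype β]
    (p : (∀ i, α i) → β → ℝ) (S : Finset (Fin M)) (x : ∀ i, α i) : ℝ :=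
  ∑ y : β, margXY p S x y

/-- Conditional mutual information `I(X_S; Y | X_A)`, via the standard
sum formula. -/
noncomputable def condMI {M : ℕ} {α : Fin M → Type*} [∀ i, Fintype (α i)]
    [∀ i, DecidableEq (α i)] {β : Type*} [Fintype β]
    (p : (∀ i, α i) → β → ℝ) (S A : Finset (Fin M)) : ℝ :=
  ∑ x : ∀ i, α i, ∑ y : β,
    p x y * Real.log ((margXY p (S ∪ A) x y * margX p A x) /
      (margX p (S ∪ A) x * margXY p A x y))

/-- `p` is a probability mass function. -/
def IsProb {M : ℕ} {α : Fin M → Type*} [∀ i, Fintype (α i)]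
    [∀ i, DecidableEq (α i)] {β : Type*} [Fintype β]
    (p : (∀ i, α i) → β → ℝ) : Prop :=
  (∀ x y, 0 ≤ p x y) ∧ ∑ x : ∀ i, α i, ∑ y : β, p x y = 1

/-- The inputs `X_1, …, X_M` are mutually independent. -/
def IndepInputs {M : ℕ} {α : Fin M → Type*} [∀ i, Fintype (α i)]
    [∀ i, DecidableEq (α i)] {β : Type*} [Fintype β]
    (p : (∀ i, α i) → β → ℝ) : Prop :=
  ∀ x : ∀ i, α i, margX p Finset.univ x = ∏ i : Fin M, margX p {i} x

/-- Membership in the fundamental region `R`. -/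
def memR {M : ℕ} {α : Fin M → Type*} [∀ i, Fintype (α i)]
    [∀ i, DecidableEq (α i)] {β : Type*} [Fintype β]
    (p : (∀ i, α i) → β → ℝ) (r : Fin M → ℝ) : Prop :=
  (∀ i, 0 ≤ r i) ∧ ∀ S : Finset (Fin M), ∑ i ∈ S, r i ≤ condMI p S Sᶜ

/-- Membership in the front facet `F_S`. -/
def memF {M : ℕ} {α : Fin M → Type*} [∀ i, Fintype (α i)]
    [∀ i, DecidableEq (α i)] {β : Type*} [Fintype β]
    (p : (∀ i, α i) → β → ℝ) (S : Finset (Fin M)) (r : Fin M → ℝ) : Prop :=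
  memR p r ∧ ∑ i ∈ S, r i = condMI p S Sᶜ

/-- Membership in the back face `B_A`. -/
def memB {M : ℕ} {α : Fin M → Type*} [∀ i, Fintype (α i)]
    [∀ i, DecidableEq (α i)] {β : Type*} [Fintype β]
    (p : (∀ i, α i) → β → ℝ) (A : Finset (Fin M)) (r : Fin M → ℝ) : Prop :=
  memR p r ∧ ∀ i ∈ A, r i = 0

section Aux

variable {M : ℕ} {α : Fin M → Type*} [∀ i, Fintype (α i)]
    [∀ i, DecidableEq (α i)] {β : Type*} [Fintype β]

lemma le_margXY (p : (∀ i, α i) → β → ℝ) (hp0 : ∀ x y, 0 ≤ p x y)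
    (T : Finset (Fin M)) (x : ∀ i, α i) (y : β) : p x y ≤ margXY p T x y := by
  have h := Finset.single_le_sum
    (f := fun x' : ∀ i, α i => if ∀ i ∈ T, x' i = x i then p x' y else 0)
    (fun x' _ => by split <;> [exact hp0 _ _; rfl]) (Finset.mem_univ x)
  simpa [margXY] using h

lemma margXY_pos (p : (∀ i, α i) → β → ℝ) (hp0 : ∀ x y, 0 ≤ p x y)
    (T : Finset (Fin M)) {x : ∀ i, α i} {y : β} (h : 0 < p x y) :
    0 < margXY p T x y := lt_of_lt_of_le h (le_margXY p hp0 T x y)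

lemma margXY_nonneg (p : (∀ i, α i) → β → ℝ) (hp0 : ∀ x y, 0 ≤ p x y)
    (T : Finset (Fin M)) (x : ∀ i, α i) (y : β) : 0 ≤ margXY p T x y := by
  refine Finset.sum_nonneg fun x' _ => ?_
  split <;> [exact hp0 _ _; rfl]

lemma margX_pos (p : (∀ i, α i) → β → ℝ) (hp0 : ∀ x y, 0 ≤ p x y)
    (T : Finset (Fin M)) {x : ∀ i, α i} {y : β} (h : 0 < p x y) :
    0 < margX p T x := by
  have : margXY p T x y ≤ margX p T x :=
    Finset.single_le_sum (fun y' _ => margXY_nonneg p hp0 T x y') (Finset.mem_univ y)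
  exact lt_of_lt_of_le (margXY_pos p hp0 T h) this

lemma chainMI (p : (∀ i, α i) → β → ℝ) (hp0 : ∀ x y, 0 ≤ p x y)
    (S L : Finset (Fin M)) (hL : L ⊆ S) :
    condMI p S Sᶜ = condMI p L Sᶜ + condMI p (S \ L) (S \ L)ᶜ := by
  have hA : (S \ L)ᶜ = L ∪ Sᶜ := by
    ext i
    simp only [Finset.mem_compl, Finset.mem_sdiff, Finset.mem_union, not_and, not_not]
    constructor
    · intro h
      by_cases hiS : i ∈ S
      · exact Or.inl (h hiS)
      · exact Or.inr hiS
    · rintro (h | h)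
      · exact fun _ => h
      · exact fun hS => absurd hS h
  unfold condMI
  rw [← Finset.sum_add_distrib]
  refine Finset.sum_congr rfl fun x _ => ?_
  rw [← Finset.sum_add_distrib]
  refine Finset.sum_congr rfl fun y _ => ?_
  rcases (hp0 x y).eq_or_lt with h | h
  · simp [← h]
  · rw [Finset.union_compl, Finset.union_compl, hA, ← mul_add]
    congr 1
    have h1 := margXY_pos p hp0 Finset.univ h
    have h2 := margXY_pos p hp0 Sᶜ h
    have h3 := margXY_pos p hp0 (L ∪ Sᶜ) h
    have h4 := margX_pos p hp0 Finset.univ h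
    have h5 := margX_pos p hp0 Sᶜ h
    have h6 := margX_pos p hp0 (L ∪ Sᶜ) h
    rw [← Real.log_mul (by positivity) (by positivity)]
    congr 1
    field_simp

end Aux

/-- If `r ∈ R` lies on the front facet `F_S`, then for every `L ⊆ S`,
`I(X_L;Y|X_{Sᶜ}) ≤ ∑_{i∈L} r_i ≤ I(X_L;Y|X_{Lᶜ})`. -/
theorem stmt9 {M : ℕ} {α : Fin M → Type*} [∀ i, Fintype (α i)]
    [∀ i, DecidableEq (α i)] {β : Type*} [Fintype β]
    (p : (∀ i, α i) → β → ℝ) (hp : IsProb p) (hind : IndepInputs p)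
    (r : Fin M → ℝ) (hr : ∀ i, 0 ≤ r i)
    (hR : ∀ S : Finset (Fin M), ∑ i ∈ S, r i ≤ condMI p S Sᶜ)
    (S : Finset (Fin M)) (hEq : ∑ i ∈ S, r i = condMI p S Sᶜ)
    (L : Finset (Fin M)) (hL : L ⊆ S) :
    condMI p L Sᶜ ≤ ∑ i ∈ L, r i ∧ ∑ i ∈ L, r i ≤ condMI p L Lᶜ := by
  constructor
  · have hch := chainMI p hp.1 S L hL
    have h2 := hR (S \ L)
    have hsplit : ∑ i ∈ S \ L, r i + ∑ i ∈ L, r i = ∑ i ∈ S, r i :=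
      Finset.sum_sdiff hL
    linarith
  · exact hR L
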